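/- The total energy function E(ρ, m, S) defined as (1/2)|m|²/ρ + (a/(γ−1)) ρ^γ exp((γ−1) S/ρ) for ρ > 0, as 0 when ρ = 0, m = 0 and S ≤ 0, and as +∞ otherwise, is a convex function on ℝ × ℝ^d × ℝ. -/

import Mathlib

open scoped ENNReal
open Classical

section EulerHelpers

lemma euler_comb_pos {ρ₁ ρ₂ t : ℝ} (hρ₁ : 0 < ρ₁) (hρ₂ : 0 < ρ₂) (ht0 : 0 ≤ t) (ht1 : t ≤ 1) :
    0 < t * ρ₁ + (1 - t) * ρ₂ := by
  rcases eq_or_lt_of_le ht0 with h | h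
  · rw [← h]; simpa using hρ₂
  · nlinarith [mul_pos h hρ₁, mul_nonneg (by linarith : (0:ℝ) ≤ 1 - t) hρ₂.le]

lemma euler_mul_log_comb_le {ρ₁ ρ₂ t : ℝ} (hρ₁ : 0 < ρ₁) (hρ₂ : 0 < ρ₂) (ht0 : 0 ≤ t)
    (ht1 : t ≤ 1) :
    (t * ρ₁ + (1 - t) * ρ₂) * Real.log (t * ρ₁ + (1 - t) * ρ₂)
      ≤ t * (ρ₁ * Real.log ρ₁) + (1 - t) * (ρ₂ * Real.log ρ₂) := by
  set ρ := t * ρ₁ + (1 - t) * ρ₂ with hρdef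
  have hρ : 0 < ρ := euler_comb_pos hρ₁ hρ₂ ht0 ht1
  have h1t : (0:ℝ) ≤ 1 - t := by linarith
  have h1 : 1 - ρ / ρ₁ ≤ Real.log ρ₁ - Real.log ρ := by
    have := Real.log_le_sub_one_of_pos (show 0 < ρ / ρ₁ by positivity)
    rw [Real.log_div hρ.ne' hρ₁.ne'] at this
    linarith
  have h2 : 1 - ρ / ρ₂ ≤ Real.log ρ₂ - Real.log ρ := by
    have := Real.log_le_sub_one_of_pos (show 0 < ρ / ρ₂ by positivity)
    rw [Real.log_div hρ.ne' hρ₂.ne'] at this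
    linarith
  have k1 : t * ρ₁ * (1 - ρ / ρ₁) ≤ t * ρ₁ * (Real.log ρ₁ - Real.log ρ) :=
    mul_le_mul_of_nonneg_left h1 (mul_nonneg ht0 hρ₁.le)
  have k2 : (1 - t) * ρ₂ * (1 - ρ / ρ₂) ≤ (1 - t) * ρ₂ * (Real.log ρ₂ - Real.log ρ) :=
    mul_le_mul_of_nonneg_left h2 (mul_nonneg h1t hρ₂.le)
  have e1 : t * ρ₁ * (1 - ρ / ρ₁) = t * ρ₁ - t * ρ := by field_simp
  have e2 : (1 - t) * ρ₂ * (1 - ρ / ρ₂) = (1 - t) * ρ₂ - (1 - t) * ρ := by field_simp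
  have e3 : ρ * Real.log ρ = t * ρ₁ * Real.log ρ + (1 - t) * ρ₂ * Real.log ρ := by
    rw [hρdef]; ring
  nlinarith [k1, k2]

lemma euler_internal_repr {γ ρ S : ℝ} (hρ : 0 < ρ) :
    ρ ^ γ * Real.exp ((γ - 1) * S / ρ)
      = ρ * Real.exp ((γ - 1) * (S + ρ * Real.log ρ) / ρ) := by
  have h : ρ * Real.exp ((γ - 1) * (S + ρ * Real.log ρ) / ρ)
      = Real.exp (Real.log ρ + (γ - 1) * (S + ρ * Real.log ρ) / ρ) := by
    rw [Real.exp_add, Real.exp_log hρ]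
  rw [h, Real.rpow_def_of_pos hρ, ← Real.exp_add]
  congr 1
  field_simp
  ring

lemma euler_internal_conv (γ : ℝ) (hγ : 1 < γ) {ρ₁ ρ₂ t S₁ S₂ : ℝ} (hρ₁ : 0 < ρ₁)
    (hρ₂ : 0 < ρ₂) (ht0 : 0 ≤ t) (ht1 : t ≤ 1) :
    (t * ρ₁ + (1 - t) * ρ₂) ^ γ
        * Real.exp ((γ - 1) * (t * S₁ + (1 - t) * S₂) / (t * ρ₁ + (1 - t) * ρ₂))
      ≤ t * (ρ₁ ^ γ * Real.exp ((γ - 1) * S₁ / ρ₁))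
        + (1 - t) * (ρ₂ ^ γ * Real.exp ((γ - 1) * S₂ / ρ₂)) := by
  have hρ : 0 < t * ρ₁ + (1 - t) * ρ₂ := euler_comb_pos hρ₁ hρ₂ ht0 ht1
  set ρ := t * ρ₁ + (1 - t) * ρ₂ with hρdef
  have h1t : (0:ℝ) ≤ 1 - t := by linarith
  have hγ1 : (0:ℝ) < γ - 1 := by linarith
  set u₁ := S₁ + ρ₁ * Real.log ρ₁ with hu₁
  set u₂ := S₂ + ρ₂ * Real.log ρ₂ with hu₂
  rw [euler_internal_repr hρ, euler_internal_repr hρ₁, euler_internal_repr hρ₂]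
  have hlog := euler_mul_log_comb_le hρ₁ hρ₂ ht0 ht1
  rw [← hρdef] at hlog
  have hAB : t * S₁ + (1 - t) * S₂ + ρ * Real.log ρ ≤ t * u₁ + (1 - t) * u₂ := by
    rw [hu₁, hu₂]; nlinarith [hlog]
  have step1 : (γ - 1) * (t * S₁ + (1 - t) * S₂ + ρ * Real.log ρ) / ρ
      ≤ (γ - 1) * (t * u₁ + (1 - t) * u₂) / ρ :=
    (div_le_div_iff_of_pos_right hρ).mpr (mul_le_mul_of_nonneg_left hAB hγ1.le)
  have ha' : (0:ℝ) ≤ t * ρ₁ / ρ := by positivity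
  have hb' : (0:ℝ) ≤ (1 - t) * ρ₂ / ρ := by positivity
  have hab : t * ρ₁ / ρ + (1 - t) * ρ₂ / ρ = 1 := by field_simp; exact hρdef.symm
  have hexp := convexOn_exp.2 (Set.mem_univ ((γ - 1) * u₁ / ρ₁))
    (Set.mem_univ ((γ - 1) * u₂ / ρ₂)) ha' hb' hab
  simp only [smul_eq_mul] at hexp
  have earg : t * ρ₁ / ρ * ((γ - 1) * u₁ / ρ₁) + (1 - t) * ρ₂ / ρ * ((γ - 1) * u₂ / ρ₂)
      = (γ - 1) * (t * u₁ + (1 - t) * u₂) / ρ := by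
    field_simp
  rw [earg] at hexp
  calc ρ * Real.exp ((γ - 1) * (t * S₁ + (1 - t) * S₂ + ρ * Real.log ρ) / ρ)
      ≤ ρ * Real.exp ((γ - 1) * (t * u₁ + (1 - t) * u₂) / ρ) :=
        mul_le_mul_of_nonneg_left (Real.exp_le_exp.mpr step1) hρ.le
    _ ≤ ρ * (t * ρ₁ / ρ * Real.exp ((γ - 1) * u₁ / ρ₁)
          + (1 - t) * ρ₂ / ρ * Real.exp ((γ - 1) * u₂ / ρ₂)) :=
        mul_le_mul_of_nonneg_left hexp hρ.le
    _ = t * (ρ₁ * Real.exp ((γ - 1) * u₁ / ρ₁))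
          + (1 - t) * (ρ₂ * Real.exp ((γ - 1) * u₂ / ρ₂)) := by
        field_simp

lemma euler_kinetic_conv {V : Type*} [NormedAddCommGroup V] [NormedSpace ℝ V]
    {ρ₁ ρ₂ t : ℝ} (m₁ m₂ : V) (hρ₁ : 0 < ρ₁) (hρ₂ : 0 < ρ₂) (ht0 : 0 ≤ t) (ht1 : t ≤ 1) :
    (1 / 2) * ‖t • m₁ + (1 - t) • m₂‖ ^ 2 / (t * ρ₁ + (1 - t) * ρ₂)
      ≤ t * ((1 / 2) * ‖m₁‖ ^ 2 / ρ₁) + (1 - t) * ((1 / 2) * ‖m₂‖ ^ 2 / ρ₂) := by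
  have hρ : 0 < t * ρ₁ + (1 - t) * ρ₂ := euler_comb_pos hρ₁ hρ₂ ht0 ht1
  have h1t : (0:ℝ) ≤ 1 - t := by linarith
  set x₁ := ‖m₁‖ with hx₁
  set x₂ := ‖m₂‖ with hx₂
  have hx₁0 : 0 ≤ x₁ := norm_nonneg _
  have hx₂0 : 0 ≤ x₂ := norm_nonneg _
  have hN : ‖t • m₁ + (1 - t) • m₂‖ ≤ t * x₁ + (1 - t) * x₂ := by
    refine (norm_add_le _ _).trans ?_
    rw [norm_smul, norm_smul, Real.norm_of_nonneg ht0, Real.norm_of_nonneg h1t]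
  have hN2 : ‖t • m₁ + (1 - t) • m₂‖ ^ 2 ≤ (t * x₁ + (1 - t) * x₂) ^ 2 :=
    pow_le_pow_left₀ (norm_nonneg _) hN 2
  have key : (1 / 2) * (t * x₁ + (1 - t) * x₂) ^ 2 / (t * ρ₁ + (1 - t) * ρ₂)
      ≤ t * ((1 / 2) * x₁ ^ 2 / ρ₁) + (1 - t) * ((1 / 2) * x₂ ^ 2 / ρ₂) := by
    rw [div_le_iff₀ hρ]
    have expand : (t * ((1 / 2) * x₁ ^ 2 / ρ₁) + (1 - t) * ((1 / 2) * x₂ ^ 2 / ρ₂))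
          * (t * ρ₁ + (1 - t) * ρ₂)
        = (t * x₁ ^ 2 * ρ₂ + (1 - t) * x₂ ^ 2 * ρ₁) * (t * ρ₁ + (1 - t) * ρ₂)
          / (2 * ρ₁ * ρ₂) := by
      field_simp
    rw [expand, le_div_iff₀ (by positivity)]
    nlinarith [mul_nonneg (mul_nonneg ht0 h1t) (sq_nonneg (x₁ * ρ₂ - x₂ * ρ₁))]
  refine le_trans ?_ key
  gcongr

lemma euler_F_nonneg (a γ : ℝ) (ha : 0 < a) (hγ : 1 < γ) {ρ : ℝ} (hρ : 0 < ρ) (x S : ℝ)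
    (hx : 0 ≤ x) :
    0 ≤ (1 / 2) * x ^ 2 / ρ + a / (γ - 1) * ρ ^ γ * Real.exp ((γ - 1) * S / ρ) := by
  have h1 : (0:ℝ) ≤ (1 / 2) * x ^ 2 / ρ := by positivity
  have h2 : (0:ℝ) < a / (γ - 1) := div_pos ha (by linarith)
  have h3 : (0:ℝ) < ρ ^ γ := Real.rpow_pos_of_pos hρ γ
  nlinarith [Real.exp_pos ((γ - 1) * S / ρ), mul_pos (mul_pos h2 h3) (Real.exp_pos ((γ - 1) * S / ρ))]

lemma euler_F_convex (a γ : ℝ) (ha : 0 < a) (hγ : 1 < γ) {V : Type*} [NormedAddCommGroup V]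
    [NormedSpace ℝ V] {ρ₁ ρ₂ t S₁ S₂ : ℝ} (m₁ m₂ : V) (hρ₁ : 0 < ρ₁) (hρ₂ : 0 < ρ₂)
    (ht0 : 0 ≤ t) (ht1 : t ≤ 1) :
    (1 / 2) * ‖t • m₁ + (1 - t) • m₂‖ ^ 2 / (t * ρ₁ + (1 - t) * ρ₂)
        + a / (γ - 1) * (t * ρ₁ + (1 - t) * ρ₂) ^ γ
          * Real.exp ((γ - 1) * (t * S₁ + (1 - t) * S₂) / (t * ρ₁ + (1 - t) * ρ₂))
      ≤ t * ((1 / 2) * ‖m₁‖ ^ 2 / ρ₁ + a / (γ - 1) * ρ₁ ^ γ * Real.exp ((γ - 1) * S₁ / ρ₁))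
        + (1 - t) * ((1 / 2) * ‖m₂‖ ^ 2 / ρ₂
            + a / (γ - 1) * ρ₂ ^ γ * Real.exp ((γ - 1) * S₂ / ρ₂)) := by
  have hc : (0:ℝ) ≤ a / (γ - 1) := le_of_lt (div_pos ha (by linarith))
  have hk := euler_kinetic_conv (ρ₁ := ρ₁) (ρ₂ := ρ₂) (t := t) m₁ m₂ hρ₁ hρ₂ ht0 ht1
  have hi := euler_internal_conv γ hγ (S₁ := S₁) (S₂ := S₂) hρ₁ hρ₂ ht0 ht1
  have hi' := mul_le_mul_of_nonneg_left hi hc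
  nlinarith [hk, hi']

lemma euler_F_scale (a γ : ℝ) (ha : 0 < a) (hγ : 1 < γ) {V : Type*} [NormedAddCommGroup V]
    [NormedSpace ℝ V] {ρ t S' : ℝ} (m : V) (S : ℝ) (hρ : 0 < ρ) (ht : 0 < t) (ht1 : t ≤ 1)
    (hS' : S' ≤ 0) :
    (1 / 2) * ‖t • m‖ ^ 2 / (t * ρ)
        + a / (γ - 1) * (t * ρ) ^ γ * Real.exp ((γ - 1) * (t * S + (1 - t) * S') / (t * ρ))
      ≤ t * ((1 / 2) * ‖m‖ ^ 2 / ρ + a / (γ - 1) * ρ ^ γ * Real.exp ((γ - 1) * S / ρ)) := by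
  have hγ1 : (0:ℝ) < γ - 1 := by linarith
  have hc : (0:ℝ) ≤ a / (γ - 1) := le_of_lt (div_pos ha hγ1)
  have hρt : 0 < t * ρ := mul_pos ht hρ
  -- kinetic part scales exactly
  have hkin : (1 / 2) * ‖t • m‖ ^ 2 / (t * ρ) = t * ((1 / 2) * ‖m‖ ^ 2 / ρ) := by
    rw [norm_smul, Real.norm_of_nonneg ht.le, mul_pow]
    field_simp
  -- internal part
  have hpow : (t * ρ) ^ γ = t ^ γ * ρ ^ γ := Real.mul_rpow ht.le hρ.le
  have htγ : t ^ γ ≤ t := by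
    have := Real.rpow_le_rpow_of_exponent_ge ht ht1 (le_of_lt hγ)
    simpa using this
  have harg : (γ - 1) * (t * S + (1 - t) * S') / (t * ρ) ≤ (γ - 1) * S / ρ := by
    have heq : (γ - 1) * (t * S + (1 - t) * S') / (t * ρ)
        = (γ - 1) * S / ρ + (γ - 1) * (1 - t) * S' / (t * ρ) := by
      field_simp
    have hneg : (γ - 1) * (1 - t) * S' / (t * ρ) ≤ 0 := by
      apply div_nonpos_of_nonpos_of_nonneg _ hρt.le
      exact mul_nonpos_of_nonneg_of_nonpos (by nlinarith) hS'
    linarith [heq.le, heq.ge]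
  have hint : a / (γ - 1) * (t * ρ) ^ γ * Real.exp ((γ - 1) * (t * S + (1 - t) * S') / (t * ρ))
      ≤ t * (a / (γ - 1) * ρ ^ γ * Real.exp ((γ - 1) * S / ρ)) := by
    rw [hpow]
    have hρpow : (0:ℝ) < ρ ^ γ := Real.rpow_pos_of_pos hρ γ
    have e1 : Real.exp ((γ - 1) * (t * S + (1 - t) * S') / (t * ρ))
        ≤ Real.exp ((γ - 1) * S / ρ) := Real.exp_le_exp.mpr harg
    have e2 : t ^ γ * Real.exp ((γ - 1) * (t * S + (1 - t) * S') / (t * ρ))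
        ≤ t * Real.exp ((γ - 1) * S / ρ) := by
      have htγ0 : (0:ℝ) ≤ t ^ γ := (Real.rpow_pos_of_pos ht γ).le
      calc t ^ γ * Real.exp ((γ - 1) * (t * S + (1 - t) * S') / (t * ρ))
          ≤ t ^ γ * Real.exp ((γ - 1) * S / ρ) := mul_le_mul_of_nonneg_left e1 htγ0
        _ ≤ t * Real.exp ((γ - 1) * S / ρ) :=
            mul_le_mul_of_nonneg_right htγ (Real.exp_pos _).le
    calc a / (γ - 1) * (t ^ γ * ρ ^ γ)
          * Real.exp ((γ - 1) * (t * S + (1 - t) * S') / (t * ρ))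
        = (a / (γ - 1) * ρ ^ γ)
          * (t ^ γ * Real.exp ((γ - 1) * (t * S + (1 - t) * S') / (t * ρ))) := by ring
      _ ≤ (a / (γ - 1) * ρ ^ γ) * (t * Real.exp ((γ - 1) * S / ρ)) :=
          mul_le_mul_of_nonneg_left e2 (mul_nonneg hc hρpow.le)
      _ = t * (a / (γ - 1) * ρ ^ γ * Real.exp ((γ - 1) * S / ρ)) := by ring
  calc (1 / 2) * ‖t • m‖ ^ 2 / (t * ρ)
        + a / (γ - 1) * (t * ρ) ^ γ * Real.exp ((γ - 1) * (t * S + (1 - t) * S') / (t * ρ))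
      ≤ t * ((1 / 2) * ‖m‖ ^ 2 / ρ) + t * (a / (γ - 1) * ρ ^ γ * Real.exp ((γ - 1) * S / ρ)) := by
        rw [hkin]; exact add_le_add (le_refl _) hint
    _ = t * ((1 / 2) * ‖m‖ ^ 2 / ρ + a / (γ - 1) * ρ ^ γ * Real.exp ((γ - 1) * S / ρ)) := by ring

end EulerHelpers

/-- The total energy of the Euler system, as an extended-real-valued function of
`(ρ, m, S)`. -/
noncomputable def totalEnergy (a γ : ℝ) (d : ℕ)
    (p : ℝ × (EuclideanSpace ℝ (Fin d)) × ℝ) : ℝ≥0∞ :=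
  if 0 < p.1 then
    ENNReal.ofReal ((1 / 2) * ‖p.2.1‖ ^ 2 / p.1 +
      a / (γ - 1) * p.1 ^ γ * Real.exp ((γ - 1) * p.2.2 / p.1))
  else if p.1 = 0 ∧ p.2.1 = 0 ∧ p.2.2 ≤ 0 then 0 else ⊤

/-- The total energy is a convex function on `ℝ × ℝ^d × ℝ`. -/
theorem totalEnergy_convex (a γ : ℝ) (ha : 0 < a) (hγ : 1 < γ) (d : ℕ) (hd : 1 ≤ d)
    (p q : ℝ × (EuclideanSpace ℝ (Fin d)) × ℝ) (t : ℝ) (ht : t ∈ Set.Icc (0 : ℝ) 1) :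
    totalEnergy a γ d (t • p + (1 - t) • q) ≤
      ENNReal.ofReal t * totalEnergy a γ d p +
        ENNReal.ofReal (1 - t) * totalEnergy a γ d q := by
  obtain ⟨ht0, ht1⟩ := ht
  -- dispose of the endpoint cases
  rcases eq_or_lt_of_le ht0 with h0 | h0
  · have hrq : t • p + (1 - t) • q = q := by rw [← h0]; simp
    rw [hrq, ← h0]
    simp
  rcases eq_or_lt_of_le ht1 with h1 | h1
  · have hrp : t • p + (1 - t) • q = p := by rw [h1]; simp
    rw [hrp, h1]
    simp
  have h1t : (0:ℝ) < 1 - t := by linarith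
  have hr1 : (t • p + (1 - t) • q).1 = t * p.1 + (1 - t) * q.1 := rfl
  have hr21 : (t • p + (1 - t) • q).2.1 = t • p.2.1 + (1 - t) • q.2.1 := rfl
  have hr22 : (t • p + (1 - t) • q).2.2 = t * p.2.2 + (1 - t) * q.2.2 := rfl
  by_cases hp : 0 < p.1
  · by_cases hq : 0 < q.1
    · -- both densities positive
      have hrpos : 0 < (t • p + (1 - t) • q).1 := by
        rw [hr1]; exact euler_comb_pos hp hq ht0 ht1
      rw [totalEnergy, totalEnergy, totalEnergy, if_pos hrpos, if_pos hp, if_pos hq,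
        ← ENNReal.ofReal_mul ht0, ← ENNReal.ofReal_mul h1t.le,
        ← ENNReal.ofReal_add
          (mul_nonneg ht0 (euler_F_nonneg a γ ha hγ hp _ _ (norm_nonneg _)))
          (mul_nonneg h1t.le (euler_F_nonneg a γ ha hγ hq _ _ (norm_nonneg _)))]
      apply ENNReal.ofReal_le_ofReal
      rw [hr1, hr21, hr22]
      exact euler_F_convex a γ ha hγ p.2.1 q.2.1 hp hq ht0 ht1
    · by_cases hq0 : q.1 = 0 ∧ q.2.1 = 0 ∧ q.2.2 ≤ 0
      · -- q is the vacuum point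
        have e1 : (t • p + (1 - t) • q).1 = t * p.1 := by rw [hr1, hq0.1]; ring
        have e2 : (t • p + (1 - t) • q).2.1 = t • p.2.1 := by
          rw [hr21, hq0.2.1, smul_zero, add_zero]
        have hrpos : 0 < (t • p + (1 - t) • q).1 := by rw [e1]; exact mul_pos h0 hp
        have hEq : totalEnergy a γ d q = 0 := by
          rw [totalEnergy, if_neg (by rw [hq0.1]; exact lt_irrefl 0), if_pos hq0]
        rw [hEq, mul_zero, add_zero, totalEnergy, totalEnergy, if_pos hrpos, if_pos hp,
          ← ENNReal.ofReal_mul ht0]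
        apply ENNReal.ofReal_le_ofReal
        rw [e1, e2, hr22]
        exact euler_F_scale a γ ha hγ p.2.1 p.2.2 hp h0 ht1 hq0.2.2
      · -- energy of q is infinite
        have hEq : totalEnergy a γ d q = ⊤ := by
          rw [totalEnergy, if_neg hq, if_neg hq0]
        rw [hEq, ENNReal.mul_top (by simp [ENNReal.ofReal_eq_zero]; linarith),
          add_top]
        exact le_top
  · by_cases hp0 : p.1 = 0 ∧ p.2.1 = 0 ∧ p.2.2 ≤ 0
    · by_cases hq : 0 < q.1
      · -- p is the vacuum point, q positive
        have e1 : (t • p + (1 - t) • q).1 = (1 - t) * q.1 := by rw [hr1, hp0.1]; ring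
        have e2 : (t • p + (1 - t) • q).2.1 = (1 - t) • q.2.1 := by
          rw [hr21, hp0.2.1, smul_zero, zero_add]
        have e3 : (t • p + (1 - t) • q).2.2
            = (1 - t) * q.2.2 + (1 - (1 - t)) * p.2.2 := by rw [hr22]; ring
        have hrpos : 0 < (t • p + (1 - t) • q).1 := by rw [e1]; exact mul_pos h1t hq
        have hEp : totalEnergy a γ d p = 0 := by
          rw [totalEnergy, if_neg (by rw [hp0.1]; exact lt_irrefl 0), if_pos hp0]
        rw [hEp, mul_zero, zero_add, totalEnergy, totalEnergy, if_pos hrpos, if_pos hq,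
          ← ENNReal.ofReal_mul h1t.le]
        apply ENNReal.ofReal_le_ofReal
        rw [e1, e2, e3]
        exact euler_F_scale a γ ha hγ q.2.1 q.2.2 hq h1t (by linarith) hp0.2.2
      · by_cases hq0 : q.1 = 0 ∧ q.2.1 = 0 ∧ q.2.2 ≤ 0
        · -- both vacuum
          have e1 : (t • p + (1 - t) • q).1 = 0 := by rw [hr1, hp0.1, hq0.1]; ring
          have e2 : (t • p + (1 - t) • q).2.1 = 0 := by
            rw [hr21, hp0.2.1, hq0.2.1, smul_zero, smul_zero, add_zero]
          have e3 : (t • p + (1 - t) • q).2.2 ≤ 0 := by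
            rw [hr22]
            have := mul_nonpos_of_nonneg_of_nonpos ht0 hp0.2.2
            have := mul_nonpos_of_nonneg_of_nonpos h1t.le hq0.2.2
            linarith
          have : totalEnergy a γ d (t • p + (1 - t) • q) = 0 := by
            rw [totalEnergy, if_neg (by rw [e1]; exact lt_irrefl 0),
              if_pos ⟨e1, e2, e3⟩]
          rw [this]
          exact zero_le
        · have hEq : totalEnergy a γ d q = ⊤ := by
            rw [totalEnergy, if_neg hq, if_neg hq0]
          rw [hEq, ENNReal.mul_top (by simp [ENNReal.ofReal_eq_zero]; linarith),
            add_top]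
          exact le_top
    · -- energy of p is infinite
      have hEp : totalEnergy a γ d p = ⊤ := by
        rw [totalEnergy, if_neg hp, if_neg hp0]
      rw [hEp, ENNReal.mul_top (by simp [ENNReal.ofReal_eq_zero]; linarith)]
      exact le_top
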